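/- Let r ≥ 2 and let H = H^(i) be a sequence of r-uniform hypergraphs on n = n(i) vertices with maximum degree Δ = Δ(H) and e(H) = α·C(n,r) edges, and let p = p(n) : ℕ → [0,1). Suppose that α·C(n,r) > n/r, p·C(n,r) → ∞, and n·p^{γ(H)}·Δ^{-4} → ∞. Then as n → ∞: (i) n^{(3−2r)/2}·p^{-1}·Δ^{4r−6} → 0 and Δ = o(n^{1/4}); (ii) α³·C(n,r)·p^{-2} = o(1); (iii) α·p^{-1}·Δ = o(n^{-1/2}), p^{-1}·Δ²·n^{2−r} = o(n^{1/2}), and p^{-1}·α²·C(n,r) = o(n^{1/2}). -/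

import Mathlib

open Finset Filter Asymptotics
open scoped Classical

def maxDeg {V : Type*} [Fintype V] [DecidableEq V] (H : Finset (Finset V)) : ℕ :=
  Finset.univ.sup (fun v => (H.filter (fun e => v ∈ e)).card)

def UniformH {V : Type*} (r : ℕ) (H : Finset (Finset V)) : Prop := ∀ e ∈ H, e.card = r

def eHmax {n : ℕ} (H : Finset (Finset (Fin n))) (v : ℕ) : ℕ :=
  (Finset.powersetCard v (Finset.univ : Finset (Fin n))).sup
    (fun W => (H.filter (fun e => e ⊆ W)).card)

noncomputable def gammaH {n : ℕ} (r : ℕ) (H : Finset (Finset (Fin n))) : ℝ :=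
  sSup ((fun v : ℕ => (eHmax H v : ℝ) / ((v : ℝ) - 2)) '' Set.Icc (r + 1) n)

lemma sum_deg {n : ℕ} (H : Finset (Finset (Fin n))) :
    ∑ v : Fin n, (H.filter (fun e => v ∈ e)).card = ∑ e ∈ H, e.card := by
  simp only [Finset.card_filter]
  rw [Finset.sum_comm]
  congr 1
  ext e
  rw [← Finset.card_filter]
  simp [Finset.filter_univ_mem]

lemma maxDeg_bounds {n r : ℕ} (hr : 2 ≤ r) (H : Finset (Finset (Fin n)))
    (hu : UniformH r H) (he : (n : ℝ) / r < (H.card : ℝ)) :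
    2 ≤ maxDeg H ∧ r * H.card ≤ n * maxDeg H := by
  have hr0 : (0:ℝ) < (r:ℝ) := by exact_mod_cast (by omega : 0 < r)
  have hlt : (n:ℝ) < (r:ℝ) * H.card := by
    rw [div_lt_iff₀ hr0] at he; linarith
  have hltN : n < r * H.card := by exact_mod_cast hlt
  have hsum : r * H.card = ∑ v : Fin n, (H.filter (fun e => v ∈ e)).card := by
    rw [sum_deg, Finset.sum_congr rfl (fun e heH => hu e heH)]
    simp [mul_comm]
  have hle : r * H.card ≤ n * maxDeg H := by
    rw [hsum]
    calc ∑ v : Fin n, (H.filter (fun e => v ∈ e)).card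
        ≤ Finset.univ.card • maxDeg H :=
          Finset.sum_le_card_nsmul _ _ _ (fun v _ => by
            unfold maxDeg; exact Finset.le_sup (f := fun v => (H.filter (fun e => v ∈ e)).card) (Finset.mem_univ v))
      _ = n * maxDeg H := by simp [Finset.card_univ]
  refine ⟨?_, hle⟩
  by_contra h
  push_neg at h
  interval_cases hD : maxDeg H <;> omega


lemma choose_lower : ∀ r : ℕ, ∀ n : ℕ, 1 ≤ r → r ≤ n →
    ((n : ℝ) / r) ^ r ≤ (n.choose r : ℝ) := by
  intro r
  induction r with
  | zero => intro n h; omega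
  | succ r ih =>
    intro n _ hrn
    rcases Nat.eq_zero_or_pos r with hrz | hrpos
    · subst hrz; simp
    · have hn1 : 1 ≤ n := by omega
      have hkey : n * (n - 1).choose r = n.choose (r + 1) * (r + 1) := by
        have h := Nat.add_one_mul_choose_eq (n - 1) r
        have hs : n - 1 + 1 = n := by omega
        rw [hs] at h
        exact h
      have hr0 : (0:ℝ) < (r:ℝ) := by exact_mod_cast hrpos
      have hr10 : (0:ℝ) < (r:ℝ) + 1 := by linarith
      have hcast : ((n - 1 : ℕ) : ℝ) = (n:ℝ) - 1 := by
        push_cast [Nat.cast_sub hn1]; ring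
      have hcn : ((r:ℝ) + 1) ≤ (n:ℝ) := by exact_mod_cast hrn
      have hn0 : (0:ℝ) ≤ (n:ℝ) := by positivity
      have hstep : (n:ℝ)/((r:ℝ)+1) ≤ ((n - 1 : ℕ):ℝ)/(r:ℝ) := by
        rw [hcast, div_le_div_iff₀ hr10 hr0]
        nlinarith
      have IH := ih (n - 1) hrpos (by omega)
      have hnn : (0:ℝ) ≤ (n:ℝ)/((r:ℝ)+1) := by positivity
      have hkeyR : (n:ℝ) * ((n - 1).choose r : ℝ) = (n.choose (r + 1) : ℝ) * ((r:ℝ) + 1) := by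
        exact_mod_cast congrArg (fun k : ℕ => (k : ℝ)) hkey
      have hcast2 : ((r + 1 : ℕ) : ℝ) = (r:ℝ) + 1 := by push_cast; ring
      rw [hcast2]
      calc ((n:ℝ)/((r:ℝ)+1))^(r+1) = ((n:ℝ)/((r:ℝ)+1)) * ((n:ℝ)/((r:ℝ)+1))^r := by ring
        _ ≤ ((n:ℝ)/((r:ℝ)+1)) * (((n - 1 : ℕ):ℝ)/(r:ℝ))^r :=
            mul_le_mul_of_nonneg_left (pow_le_pow_left₀ hnn hstep r) hnn
        _ ≤ ((n:ℝ)/((r:ℝ)+1)) * ((n - 1).choose r : ℝ) :=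
            mul_le_mul_of_nonneg_left IH hnn
        _ = (n.choose (r + 1) : ℝ) := by
            field_simp
            linarith [hkeyR]

lemma eHmax_two {n r : ℕ} (hr : 2 ≤ r) {H : Finset (Finset (Fin n))}
    (hu : UniformH r H) (hD : 2 ≤ maxDeg H) (hn : 2 * r - 1 ≤ n) :
    2 ≤ eHmax H (2 * r - 1) := by
  have hne : (Finset.univ : Finset (Fin n)).Nonempty := by
    have hn0 : 0 < n := by omega
    exact ⟨⟨0, hn0⟩, Finset.mem_univ _⟩
  obtain ⟨v, -, hv⟩ := Finset.exists_mem_eq_sup Finset.univ hne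
    (fun v => (H.filter (fun e => v ∈ e)).card)
  have hv2 : 1 < (H.filter (fun e => v ∈ e)).card := by
    have : maxDeg H = (H.filter (fun e => v ∈ e)).card := hv
    omega
  obtain ⟨e₁, he₁, e₂, he₂, hne12⟩ := Finset.one_lt_card.mp hv2
  have he₁H : e₁ ∈ H := (Finset.mem_filter.mp he₁).1
  have he₂H : e₂ ∈ H := (Finset.mem_filter.mp he₂).1
  have hv₁ : v ∈ e₁ := (Finset.mem_filter.mp he₁).2
  have hv₂ : v ∈ e₂ := (Finset.mem_filter.mp he₂).2
  have hcard : (e₁ ∪ e₂).card ≤ 2 * r - 1 := by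
    have h1 : e₁ ∪ e₂ = e₁ ∪ (e₂ \ e₁) := by
      rw [Finset.union_sdiff_self_eq_union]
    have h2 : e₂ \ e₁ ⊆ e₂.erase v := by
      intro w hw
      rcases Finset.mem_sdiff.mp hw with ⟨hw2, hw1⟩
      exact Finset.mem_erase.mpr ⟨fun h => hw1 (h ▸ hv₁), hw2⟩
    have h3 : (e₂ \ e₁).card ≤ r - 1 := by
      have := Finset.card_le_card h2
      rwa [Finset.card_erase_of_mem hv₂, hu e₂ he₂H] at this
    calc (e₁ ∪ e₂).card ≤ e₁.card + (e₂ \ e₁).card := by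
          rw [h1]; exact Finset.card_union_le _ _
      _ ≤ r + (r - 1) := by
          have := hu e₁ he₁H
          omega
      _ = 2 * r - 1 := by omega
  obtain ⟨W, hWsub, hWcard⟩ := Finset.exists_superset_card_eq hcard
    (by simpa using hn)
  have hWmem : W ∈ Finset.powersetCard (2 * r - 1) (Finset.univ : Finset (Fin n)) :=
    Finset.mem_powersetCard_univ.mpr hWcard
  have hsubset : ({e₁, e₂} : Finset (Finset (Fin n))) ⊆ H.filter (fun e => e ⊆ W) := by
    intro e he
    rcases Finset.mem_insert.mp he with h | h
    · subst h
      exact Finset.mem_filter.mpr ⟨he₁H, (Finset.subset_union_left).trans hWsub⟩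
    · rw [Finset.mem_singleton.mp h]
      exact Finset.mem_filter.mpr ⟨he₂H, (Finset.subset_union_right).trans hWsub⟩
  calc 2 = ({e₁, e₂} : Finset (Finset (Fin n))).card := (Finset.card_pair hne12).symm
    _ ≤ (H.filter (fun e => e ⊆ W)).card := Finset.card_le_card hsubset
    _ ≤ eHmax H (2 * r - 1) := by
        unfold eHmax
        exact Finset.le_sup (f := fun W => (H.filter (fun e => e ⊆ W)).card) hWmem

lemma gamma_ge {n r : ℕ} (hr : 2 ≤ r) {H : Finset (Finset (Fin n))} (hn : 2 * r - 1 ≤ n)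
    (h2 : 2 ≤ eHmax H (2 * r - 1)) : 2 / (2 * (r:ℝ) - 3) ≤ gammaH r H := by
  have hmem : (2 * r - 1 : ℕ) ∈ Set.Icc (r + 1) n := ⟨by omega, hn⟩
  have hbdd : BddAbove ((fun v : ℕ => (eHmax H v : ℝ) / ((v : ℝ) - 2)) '' Set.Icc (r + 1) n) :=
    ((Set.finite_Icc _ _).image _).bddAbove
  have hval := le_csSup hbdd (Set.mem_image_of_mem _ hmem)
  refine le_trans ?_ hval
  have hcast : ((2 * r - 1 : ℕ) : ℝ) = 2 * (r:ℝ) - 1 := by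
    push_cast [Nat.cast_sub (by omega : 1 ≤ 2 * r)]; ring
  rw [hcast]
  have hden : (0:ℝ) < 2 * (r:ℝ) - 1 - 2 := by
    have : (2:ℝ) ≤ (r:ℝ) := by exact_mod_cast hr
    linarith
  have h2' : (2:ℝ) ≤ (eHmax H (2 * r - 1) : ℝ) := by exact_mod_cast h2
  have : 2 / (2 * (r:ℝ) - 1 - 2) ≤ (eHmax H (2 * r - 1) : ℝ) / (2 * (r:ℝ) - 1 - 2) := by
    gcongr
  refine le_trans (le_of_eq ?_) this
  ring_nf

lemma boundZ {x d t pinv : ℝ} (hx : 0 < x) (hd : 1 ≤ d) (ht : 0 < t)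
    (hpinv : 0 ≤ pinv) {a b sa sb sc : ℝ}
    (hkey : pinv ≤ x ^ sa * d ^ sb * t ^ sc)
    (ha : a + sa = 0) (hb : b + sb ≤ 0) :
    x ^ a * d ^ b * pinv ≤ t ^ sc := by
  have hd0 : (0:ℝ) < d := by linarith
  have h1 : x ^ a * d ^ b * pinv ≤ x ^ a * d ^ b * (x ^ sa * d ^ sb * t ^ sc) := by
    apply mul_le_mul_of_nonneg_left hkey (by positivity)
  have h2 : x ^ a * d ^ b * (x ^ sa * d ^ sb * t ^ sc)
      = x ^ (a + sa) * d ^ (b + sb) * t ^ sc := by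
    rw [Real.rpow_add hx, Real.rpow_add hd0]; ring
  rw [h2, ha, Real.rpow_zero, one_mul] at h1
  have h3 : d ^ (b + sb) ≤ 1 := Real.rpow_le_one_of_one_le_of_nonpos hd hb
  calc x ^ a * d ^ b * pinv ≤ d ^ (b + sb) * t ^ sc := h1
    _ ≤ 1 * t ^ sc := by
        apply mul_le_mul_of_nonneg_right h3 (by positivity)
    _ = t ^ sc := one_mul _

set_option maxHeartbeats 2000000 in
theorem estimates_lemma
    (r : ℕ) (hr : 2 ≤ r)
    (nseq : ℕ → ℕ) (hn : Tendsto nseq atTop atTop)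
    (H : ∀ i : ℕ, Finset (Finset (Fin (nseq i))))
    (hunif : ∀ i, UniformH r (H i))
    (p : ℕ → ℝ) (hp : ∀ i, 0 ≤ p i ∧ p i < 1)
    (hedge : ∀ i, (nseq i : ℝ) / r < ((H i).card : ℝ))
    (hpn : Tendsto (fun i => p i * (Nat.choose (nseq i) r : ℝ)) atTop atTop)
    (hcond : Tendsto
      (fun i => (nseq i : ℝ) * p i ^ gammaH r (H i) * (maxDeg (H i) : ℝ) ^ (-4 : ℤ))
      atTop atTop) :
    Tendsto (fun i => (nseq i : ℝ) ^ (((3 : ℝ) - 2 * r) / 2) * (p i)⁻¹ *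
        (maxDeg (H i) : ℝ) ^ (4 * r - 6)) atTop (nhds 0) ∧
    (fun i => (maxDeg (H i) : ℝ)) =o[atTop] (fun i => (nseq i : ℝ) ^ ((1 : ℝ) / 4)) ∧
    Tendsto (fun i => (((H i).card : ℝ) / (Nat.choose (nseq i) r : ℝ)) ^ 3 *
        (Nat.choose (nseq i) r : ℝ) * ((p i)⁻¹) ^ 2) atTop (nhds 0) ∧
    (fun i => ((H i).card : ℝ) / (Nat.choose (nseq i) r : ℝ) * (p i)⁻¹ * (maxDeg (H i) : ℝ))
      =o[atTop] (fun i => (nseq i : ℝ) ^ (-(1 : ℝ) / 2)) ∧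
    (fun i => (p i)⁻¹ * (maxDeg (H i) : ℝ) ^ 2 * (nseq i : ℝ) ^ ((2 : ℝ) - r))
      =o[atTop] (fun i => (nseq i : ℝ) ^ ((1 : ℝ) / 2)) ∧
    (fun i => (p i)⁻¹ * (((H i).card : ℝ) / (Nat.choose (nseq i) r : ℝ)) ^ 2 *
        (Nat.choose (nseq i) r : ℝ))
      =o[atTop] (fun i => (nseq i : ℝ) ^ ((1 : ℝ) / 2)) := by
  have hrr2 : (2:ℝ) ≤ (r:ℝ) := by exact_mod_cast hr
  set rr : ℝ := (r : ℝ) with hrrdef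
  set s : ℝ := (2 * rr - 3) / 2 with hsdef
  have hs0 : 0 < s := by rw [hsdef]; linarith
  set T : ℕ → ℝ := fun i =>
    (nseq i : ℝ) * p i ^ gammaH r (H i) * (maxDeg (H i) : ℝ) ^ (-4 : ℤ) with hTdef
  have hTtop : Tendsto T atTop atTop := hcond
  have hev : ∀ᶠ i in atTop, 2 * r ≤ nseq i := hn.eventually_ge_atTop _
  have hT1 : ∀ᶠ i in atTop, 1 ≤ T i := hTtop.eventually_ge_atTop 1
  have bundle : ∀ᶠ i in atTop,
      ((nseq i : ℝ) ^ (((3 : ℝ) - 2 * rr) / 2) * (p i)⁻¹ *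
          (maxDeg (H i) : ℝ) ^ (4 * r - 6) ≤ (T i) ^ (-s)) ∧
      ((maxDeg (H i) : ℝ) / (nseq i : ℝ) ^ ((1 : ℝ) / 4) ≤ (T i) ^ (-((1:ℝ)/4))) ∧
      ((((H i).card : ℝ) / (Nat.choose (nseq i) r : ℝ)) ^ 3 *
          (Nat.choose (nseq i) r : ℝ) * ((p i)⁻¹) ^ 2 ≤ rr ^ (2*rr-3) * (T i) ^ (-(2*s))) ∧
      (((H i).card : ℝ) / (Nat.choose (nseq i) r : ℝ) * (p i)⁻¹ * (maxDeg (H i) : ℝ) /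
          (nseq i : ℝ) ^ (-(1 : ℝ) / 2) ≤ rr ^ (rr-1) * (T i) ^ (-s)) ∧
      ((p i)⁻¹ * (maxDeg (H i) : ℝ) ^ 2 * (nseq i : ℝ) ^ ((2 : ℝ) - rr) /
          (nseq i : ℝ) ^ ((1 : ℝ) / 2) ≤ (T i) ^ (-s)) ∧
      ((p i)⁻¹ * (((H i).card : ℝ) / (Nat.choose (nseq i) r : ℝ)) ^ 2 *
          (Nat.choose (nseq i) r : ℝ) / (nseq i : ℝ) ^ ((1 : ℝ) / 2) ≤ rr ^ (rr-2) * (T i) ^ (-s)) := by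
    filter_upwards [hev, hT1] with i hni hTi
    obtain ⟨hD2, hDsum⟩ := maxDeg_bounds hr (H i) (hunif i) (hedge i)
    set x : ℝ := (nseq i : ℝ) with hxdef
    set d : ℝ := (maxDeg (H i) : ℝ) with hddef
    set eH : ℝ := ((H i).card : ℝ) with hedef
    set N : ℝ := (Nat.choose (nseq i) r : ℝ) with hNdef
    set γ : ℝ := gammaH r (H i) with hγdef
    have hx1 : (1:ℝ) ≤ x := by
      rw [hxdef]; exact_mod_cast (by omega : 1 ≤ nseq i)
    have hx0 : (0:ℝ) < x := by linarith
    have hd2 : (2:ℝ) ≤ d := by rw [hddef]; exact_mod_cast hD2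
    have hd0 : (0:ℝ) < d := by linarith
    have hd1 : (1:ℝ) ≤ d := by linarith
    have h2rr3 : (0:ℝ) < 2 * rr - 3 := by linarith
    have hγ : 2 / (2 * rr - 3) ≤ γ := by
      rw [hγdef, hrrdef]
      exact gamma_ge hr (by omega)
        (eHmax_two hr (hunif i) hD2 (by omega))
    have hγ0 : (0:ℝ) < γ := lt_of_lt_of_le (by positivity) hγ
    have hp0 : 0 < p i := by
      rcases ((hp i).1).lt_or_eq with h | h
      · exact h
      · exfalso
        have hTz : T i = 0 := by
          rw [hTdef]
          simp only
          rw [← h, Real.zero_rpow hγ0.ne', mul_zero, zero_mul]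
        rw [hTz] at hTi; linarith
    have hp1 : p i < 1 := (hp i).2
    have hd4 : (0:ℝ) < d ^ (4:ℕ) := by positivity
    have hzp : d ^ (-4 : ℤ) = (d ^ (4:ℕ))⁻¹ := by
      rw [zpow_neg]; norm_cast
    have hTval : T i = x * p i ^ γ * (d ^ (4:ℕ))⁻¹ := by
      rw [hTdef]; simp only []; rw [hzp]
    have hpγ : p i ^ γ = T i * d ^ (4:ℕ) / x := by
      rw [hTval]; field_simp
    have hpγ1 : p i ^ γ ≤ 1 := Real.rpow_le_one (hp i).1 hp1.le hγ0.le
    have hTd4 : T i * d ^ (4:ℕ) ≤ x := by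
      rw [hpγ, div_le_one hx0] at hpγ1; exact hpγ1
    have hT0 : (0:ℝ) < T i := by linarith
    have hγs : 1 ≤ γ * s := by
      have h1 : 2 / (2 * rr - 3) * s = 1 := by
        rw [hsdef]; field_simp
      calc (1:ℝ) = 2 / (2 * rr - 3) * s := h1.symm
        _ ≤ γ * s := mul_le_mul_of_nonneg_right hγ hs0.le
    have hkey : (p i)⁻¹ ≤ x ^ s * d ^ (-(4*s)) * (T i) ^ (-s) := by
      have e1 : (p i)⁻¹ = p i ^ (-1:ℝ) := (Real.rpow_neg_one _).symm
      have e2 : p i ^ (-1:ℝ) ≤ p i ^ (γ * (-s)) :=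
        Real.rpow_le_rpow_of_exponent_ge hp0 hp1.le (by nlinarith)
      have e3 : p i ^ (γ * (-s)) = (p i ^ γ) ^ (-s) := Real.rpow_mul (hp i).1 _ _
      have e5 : (T i * d ^ (4:ℕ) / x) ^ (-s) = x ^ s * d ^ (-(4*s)) * (T i) ^ (-s) := by
        rw [Real.rpow_neg (by positivity), Real.div_rpow (by positivity) hx0.le,
          Real.mul_rpow hT0.le hd4.le, ← Real.rpow_natCast d 4, ← Real.rpow_mul hd0.le,
          Real.rpow_neg hd0.le, Real.rpow_neg hT0.le]
        rw [show ((4:ℕ):ℝ) * s = 4 * s by norm_num]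
        field_simp
      rw [e1]
      calc p i ^ (-1:ℝ) ≤ p i ^ (γ * (-s)) := e2
        _ = (p i ^ γ) ^ (-s) := e3
        _ = (T i * d ^ (4:ℕ) / x) ^ (-s) := by rw [hpγ]
        _ = x ^ s * d ^ (-(4*s)) * (T i) ^ (-s) := e5
    have hpinv0 : (0:ℝ) ≤ (p i)⁻¹ := inv_nonneg.mpr (hp i).1
    have heN : rr * eH ≤ x * d := by
      rw [hrrdef, hedef, hxdef, hddef]
      exact_mod_cast hDsum
    have hrr0 : (0:ℝ) < rr := by linarith
    have heA : eH ≤ x * d / rr := by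
      rw [le_div_iff₀ hrr0]; linarith
    have hNlow : (x / rr) ^ (r:ℕ) ≤ N := by
      rw [hxdef, hrrdef, hNdef]
      exact choose_lower r (nseq i) (by omega) (by omega)
    have hN0 : (0:ℝ) < N := by
      rw [hNdef]
      exact_mod_cast Nat.choose_pos (by omega : r ≤ nseq i)
    have hM0 : (0:ℝ) < (x / rr) ^ (r:ℕ) := by positivity
    have he0 : (0:ℝ) ≤ eH := by rw [hedef]; exact Nat.cast_nonneg _
    have hA0 : (0:ℝ) ≤ x * d / rr := by positivity
    refine ⟨?_, ?_, ?_, ?_, ?_, ?_⟩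
    · -- G1
      have hcast46 : d ^ (4*r-6) = d ^ ((4*rr - 6 : ℝ)) := by
        rw [← Real.rpow_natCast d (4*r-6)]
        congr 1
        rw [hrrdef]
        push_cast [Nat.cast_sub (by omega : 6 ≤ 4*r)]
        ring
      rw [hcast46, mul_right_comm]
      exact boundZ hx0 hd1 hT0 hpinv0 hkey (by rw [hsdef]; ring)
        (by rw [hsdef]; linarith)
    · -- G2
      have h4 : d ^ (4:ℕ) ≤ x / T i := by
        rw [le_div_iff₀ hT0]; linarith
      have hdd : d ≤ (x / T i) ^ ((1:ℝ)/4) := by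
        have hda : d = (d ^ (4:ℕ)) ^ ((1:ℝ)/4) := by
          rw [← Real.rpow_natCast d 4, ← Real.rpow_mul hd0.le]
          norm_num
        rw [hda]
        exact Real.rpow_le_rpow (by positivity) h4 (by norm_num)
      rw [div_eq_mul_inv]
      calc d * (x ^ ((1:ℝ)/4))⁻¹ ≤ (x / T i) ^ ((1:ℝ)/4) * (x ^ ((1:ℝ)/4))⁻¹ :=
            mul_le_mul_of_nonneg_right hdd (by positivity)
        _ = (T i) ^ (-((1:ℝ)/4)) := by
            rw [Real.div_rpow hx0.le hT0.le, Real.rpow_neg hT0.le]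
            field_simp
    · -- G3
      have hkey2 : ((p i)⁻¹) ^ 2 ≤ x ^ (2*s) * d ^ (-(8*s)) * (T i) ^ (-(2*s)) := by
        calc ((p i)⁻¹) ^ 2 ≤ (x ^ s * d ^ (-(4*s)) * (T i) ^ (-s)) ^ 2 :=
              pow_le_pow_left₀ hpinv0 hkey 2
          _ = x ^ (s+s) * d ^ (-(4*s) + -(4*s)) * (T i) ^ (-s + -s) := by
              rw [Real.rpow_add hx0, Real.rpow_add hd0, Real.rpow_add hT0]; ring
          _ = x ^ (2*s) * d ^ (-(8*s)) * (T i) ^ (-(2*s)) := by ring_nf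
      have hG3a : (eH / N) ^ 3 * N * ((p i)⁻¹) ^ 2 = eH^3 / N^2 * ((p i)⁻¹) ^ 2 := by
        field_simp
      have he3 : eH^3 ≤ (x*d/rr)^3 := pow_le_pow_left₀ he0 heA 3
      have hN2 : ((x/rr)^(r:ℕ))^2 ≤ N^2 := pow_le_pow_left₀ hM0.le hNlow 2
      have hfrac : eH^3 / N^2 ≤ (x*d/rr)^3 / ((x/rr)^(r:ℕ))^2 :=
        div_le_div₀ (by positivity) he3 (by positivity) hN2
      have hB : (x*d/rr)^3 / ((x/rr)^(r:ℕ))^2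
          = rr ^ (2*rr-3) * (x ^ ((3:ℝ)-2*rr) * d ^ ((3:ℝ))) := by
        rw [Real.rpow_sub hrr0, Real.rpow_sub hx0,
          show (2:ℝ)*rr = ((2*r:ℕ):ℝ) by rw [hrrdef]; push_cast; ring,
          Real.rpow_natCast rr (2*r), Real.rpow_natCast x (2*r),
          show ((3:ℝ)) = ((3:ℕ):ℝ) by norm_num,
          Real.rpow_natCast rr 3, Real.rpow_natCast x 3, Real.rpow_natCast d 3]
        field_simp
        rw [div_pow, div_pow, ← pow_mul, ← pow_mul, mul_comm r 2, div_mul_cancel₀ _ (pow_ne_zero _ hrr0.ne')]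
      calc (eH / N) ^ 3 * N * ((p i)⁻¹) ^ 2
          = eH^3 / N^2 * ((p i)⁻¹) ^ 2 := hG3a
        _ ≤ (x*d/rr)^3 / ((x/rr)^(r:ℕ))^2 * ((p i)⁻¹) ^ 2 :=
            mul_le_mul_of_nonneg_right hfrac (by positivity)
        _ = rr ^ (2*rr-3) * (x ^ ((3:ℝ)-2*rr) * d ^ ((3:ℝ)) * ((p i)⁻¹) ^ 2) := by
            rw [hB]; ring
        _ ≤ rr ^ (2*rr-3) * (T i) ^ (-(2*s)) := by
            apply mul_le_mul_of_nonneg_left _ (by positivity)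
            exact boundZ hx0 hd1 hT0 (by positivity) hkey2
              (by rw [hsdef]; ring) (by rw [hsdef]; linarith)
    · -- G4
      have hxinv : x ^ (-(1:ℝ)/2) = (x ^ ((1:ℝ)/2))⁻¹ := by
        rw [show (-(1:ℝ)/2) = -((1:ℝ)/2) by ring, Real.rpow_neg hx0.le]
      have hEN : eH / N ≤ (x*d/rr) / ((x/rr)^(r:ℕ)) :=
        div_le_div₀ hA0 heA hM0 hNlow
      have hE4 : (x*d/rr) / ((x/rr)^(r:ℕ)) * (p i)⁻¹ * d / x ^ (-(1:ℝ)/2)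
          = rr ^ (rr-1) * (x ^ ((3:ℝ)/2-rr) * d ^ ((2:ℝ)) * (p i)⁻¹) := by
        rw [hxinv, div_eq_mul_inv _ ((x ^ ((1:ℝ)/2))⁻¹), inv_inv]
        rw [show (3:ℝ)/2 - rr = (1:ℝ)/2 + ((1:ℝ) - rr) by ring, Real.rpow_add hx0,
          Real.rpow_sub hx0, Real.rpow_sub hrr0, Real.rpow_one, Real.rpow_one,
          show rr = ((r:ℕ):ℝ) by rw [hrrdef],
          Real.rpow_natCast x r, Real.rpow_natCast rr r,
          show ((2:ℝ)) = ((2:ℕ):ℝ) by norm_num, Real.rpow_natCast d 2]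
        rw [div_pow]
        field_simp
        ring
      calc eH / N * (p i)⁻¹ * d / x ^ (-(1:ℝ)/2)
          ≤ (x*d/rr) / ((x/rr)^(r:ℕ)) * (p i)⁻¹ * d / x ^ (-(1:ℝ)/2) := by
            rw [hxinv]
            apply mul_le_mul_of_nonneg_right _ (by positivity)
            apply mul_le_mul_of_nonneg_right _ hd0.le
            exact mul_le_mul_of_nonneg_right hEN hpinv0
        _ = rr ^ (rr-1) * (x ^ ((3:ℝ)/2-rr) * d ^ ((2:ℝ)) * (p i)⁻¹) := hE4
        _ ≤ rr ^ (rr-1) * (T i) ^ (-s) := by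
            apply mul_le_mul_of_nonneg_left _ (by positivity)
            exact boundZ hx0 hd1 hT0 hpinv0 hkey
              (by rw [hsdef]; ring) (by rw [hsdef]; linarith)
    · -- G5
      have hE5 : (p i)⁻¹ * d ^ 2 * x ^ ((2:ℝ) - rr) / x ^ ((1:ℝ)/2)
          = x ^ ((3:ℝ)/2-rr) * d ^ ((2:ℝ)) * (p i)⁻¹ := by
        have h1 : x ^ ((2:ℝ) - rr) = x ^ ((3:ℝ)/2 - rr) * x ^ ((1:ℝ)/2) := by
          rw [← Real.rpow_add hx0]; ring_nf
        have h2 : d ^ ((2:ℝ)) = d ^ (2:ℕ) := by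
          rw [← Real.rpow_natCast d 2]; norm_num
        have hxh : x ^ ((1:ℝ)/2) ≠ 0 := by positivity
        rw [h1, h2]
        field_simp
      rw [hE5]
      exact boundZ hx0 hd1 hT0 hpinv0 hkey
        (by rw [hsdef]; ring) (by rw [hsdef]; linarith)
    · -- G6
      have hG6a : (p i)⁻¹ * (eH / N) ^ 2 * N / x ^ ((1:ℝ)/2)
          = eH^2 / N * (p i)⁻¹ / x ^ ((1:ℝ)/2) := by
        field_simp
      have he2 : eH^2 ≤ (x*d/rr)^2 := pow_le_pow_left₀ he0 heA 2
      have hfrac : eH^2 / N ≤ (x*d/rr)^2 / ((x/rr)^(r:ℕ)) :=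
        div_le_div₀ (by positivity) he2 hM0 hNlow
      have hE6 : (x*d/rr)^2 / ((x/rr)^(r:ℕ)) * (p i)⁻¹ / x ^ ((1:ℝ)/2)
          = rr ^ (rr-2) * (x ^ ((3:ℝ)/2-rr) * d ^ ((2:ℝ)) * (p i)⁻¹) := by
        rw [show (3:ℝ)/2 - rr = -((1:ℝ)/2) + ((2:ℝ) - rr) by ring, Real.rpow_add hx0,
          Real.rpow_sub hx0, Real.rpow_sub hrr0, Real.rpow_neg hx0.le,
          show rr = ((r:ℕ):ℝ) by rw [hrrdef],
          Real.rpow_natCast x r, Real.rpow_natCast rr r,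
          show ((2:ℝ)) = ((2:ℕ):ℝ) by norm_num,
          Real.rpow_natCast d 2, Real.rpow_natCast x 2, Real.rpow_natCast rr 2]
        rw [div_pow]
        field_simp
        rw [mul_assoc, div_pow, div_mul_cancel₀ _ (pow_ne_zero _ hrr0.ne')]
      calc (p i)⁻¹ * (eH / N) ^ 2 * N / x ^ ((1:ℝ)/2)
          = eH^2 / N * (p i)⁻¹ / x ^ ((1:ℝ)/2) := hG6a
        _ ≤ (x*d/rr)^2 / ((x/rr)^(r:ℕ)) * (p i)⁻¹ / x ^ ((1:ℝ)/2) := by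
            gcongr
        _ = rr ^ (rr-2) * (x ^ ((3:ℝ)/2-rr) * d ^ ((2:ℝ)) * (p i)⁻¹) := hE6
        _ ≤ rr ^ (rr-2) * (T i) ^ (-s) := by
            apply mul_le_mul_of_nonneg_left _ (by positivity)
            exact boundZ hx0 hd1 hT0 hpinv0 hkey
              (by rw [hsdef]; ring) (by rw [hsdef]; linarith)
  have hB1 := bundle.mono (fun i h => h.1)
  have hB2 := bundle.mono (fun i h => h.2.1)
  have hB3 := bundle.mono (fun i h => h.2.2.1)
  have hB4 := bundle.mono (fun i h => h.2.2.2.1)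
  have hB5 := bundle.mono (fun i h => h.2.2.2.2.1)
  have hB6 := bundle.mono (fun i h => h.2.2.2.2.2)
  have ht : ∀ u : ℝ, 0 < u → Tendsto (fun i => (T i) ^ (-u)) atTop (nhds 0) :=
    fun u hu => (tendsto_rpow_neg_atTop hu).comp hTtop
  have htc : ∀ C u : ℝ, 0 < u → Tendsto (fun i => C * (T i) ^ (-u)) atTop (nhds 0) := by
    intro C u hu
    simpa using (ht u hu).const_mul C
  have hgne : ∀ (β : ℝ), ∀ᶠ i in atTop, (nseq i : ℝ) ^ β = 0 → False := by
    intro β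
    filter_upwards [hev] with i hi
    intro h0
    have hx0 : (0:ℝ) < (nseq i : ℝ) := by exact_mod_cast (by omega : 0 < nseq i)
    exact absurd h0 (Real.rpow_pos_of_pos hx0 β).ne'
  refine ⟨?_, ?_, ?_, ?_, ?_, ?_⟩
  · exact squeeze_zero' (Filter.Eventually.of_forall (fun i =>
      mul_nonneg (mul_nonneg (Real.rpow_nonneg (Nat.cast_nonneg _) _)
        (inv_nonneg.mpr (hp i).1)) (pow_nonneg (Nat.cast_nonneg _) _)))
      hB1 (ht s hs0)
  · refine (Asymptotics.isLittleO_iff_tendsto' ((hgne _).mono (fun i h h0 => absurd h0 h))).mpr ?_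
    exact squeeze_zero' (Filter.Eventually.of_forall (fun i =>
      div_nonneg (Nat.cast_nonneg _) (Real.rpow_nonneg (Nat.cast_nonneg _) _)))
      hB2 (ht ((1:ℝ)/4) (by norm_num))
  · exact squeeze_zero' (Filter.Eventually.of_forall (fun i =>
      mul_nonneg (mul_nonneg (pow_nonneg (div_nonneg (Nat.cast_nonneg _) (Nat.cast_nonneg _)) 3)
        (Nat.cast_nonneg _)) (pow_nonneg (inv_nonneg.mpr (hp i).1) 2)))
      hB3 (htc _ (2*s) (by positivity))
  · refine (Asymptotics.isLittleO_iff_tendsto' ((hgne _).mono (fun i h h0 => absurd h0 h))).mpr ?_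
    exact squeeze_zero' (Filter.Eventually.of_forall (fun i =>
      div_nonneg (mul_nonneg (mul_nonneg (div_nonneg (Nat.cast_nonneg _) (Nat.cast_nonneg _))
        (inv_nonneg.mpr (hp i).1)) (Nat.cast_nonneg _))
        (Real.rpow_nonneg (Nat.cast_nonneg _) _)))
      hB4 (htc _ s hs0)
  · refine (Asymptotics.isLittleO_iff_tendsto' ((hgne _).mono (fun i h h0 => absurd h0 h))).mpr ?_
    exact squeeze_zero' (Filter.Eventually.of_forall (fun i =>
      div_nonneg (mul_nonneg (mul_nonneg (inv_nonneg.mpr (hp i).1)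
        (pow_nonneg (Nat.cast_nonneg _) 2)) (Real.rpow_nonneg (Nat.cast_nonneg _) _))
        (Real.rpow_nonneg (Nat.cast_nonneg _) _)))
      hB5 (ht s hs0)
  · refine (Asymptotics.isLittleO_iff_tendsto' ((hgne _).mono (fun i h h0 => absurd h0 h))).mpr ?_
    exact squeeze_zero' (Filter.Eventually.of_forall (fun i =>
      div_nonneg (mul_nonneg (mul_nonneg (inv_nonneg.mpr (hp i).1)
        (pow_nonneg (div_nonneg (Nat.cast_nonneg _) (Nat.cast_nonneg _)) 2)) (Nat.cast_nonneg _))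
        (Real.rpow_nonneg (Nat.cast_nonneg _) _)))
      hB6 (htc _ s hs0)
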